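/- Let $p$ and $q$ be probability distributions on $H = \{1,\ldots,N\}$ with $p \prec q$ (majorization). Then for every $n \ge 1$ and every $k \ge 1$, $P_p(Y_n \le k) \le P_q(Y_n \le k)$; i.e., the map $p \mapsto P_p(Y_n \le k)$ is Schur-convex. -/

import Mathlib

open Finset

/-- The probability of an event `E` for `n` i.i.d. draws from the distribution `p`
on `{1, …, N}`: the sum of the product weights of the outcome sequences in `E`. -/
noncomputable def prob {N : ℕ} (p : Fin N → ℝ) {n : ℕ} (E : Set (Fin n → Fin N)) : ℝ :=
  ∑ ω : Fin n → Fin N, Set.indicator E (fun ω => ∏ i, p (ω i)) ω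

/-- The number of distinct values drawn, `Y_n`. -/
noncomputable def distinctCount {N n : ℕ} (ω : Fin n → Fin N) : ℕ :=
  (Finset.univ.image ω).card

/-- `p` is majorized by `q` (for vectors with equal total sums): every partial sum of `p`
over a subset is dominated by a sum of `q` over a subset of the same cardinality, i.e.
the sum of the `k` largest entries of `p` is at most that of `q`, for every `k`. -/
def Majorizes {N : ℕ} (q p : Fin N → ℝ) : Prop :=
  ∀ A : Finset (Fin N), ∃ B : Finset (Fin N), B.card = A.card ∧ ∑ i ∈ A, p i ≤ ∑ i ∈ B, q i

-- core power inequality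
lemma pow_ineq {x y x' y' : ℝ} (m : ℕ) (h0 : 0 ≤ y') (h1 : y' ≤ y) (h2 : y ≤ x)
    (h3 : x ≤ x') (hs : x + y = x' + y') : x ^ m + y ^ m ≤ x' ^ m + y' ^ m := by
  have hy0 : 0 ≤ y := le_trans h0 h1
  have hx0 : 0 ≤ x := le_trans hy0 h2
  have hx'0 : 0 ≤ x' := le_trans hx0 h3
  have e1 := geom_sum₂_mul x' x m
  have e2 := geom_sum₂_mul y y' m
  have hterm : (∑ i ∈ Finset.range m, y ^ i * y' ^ (m - 1 - i))
      ≤ ∑ i ∈ Finset.range m, x' ^ i * x ^ (m - 1 - i) := by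
    apply Finset.sum_le_sum
    intro i _
    have h4 : y ≤ x' := le_trans h2 h3
    have h5 : y' ≤ x := le_trans h1 h2
    exact mul_le_mul (pow_le_pow_left₀ hy0 h4 i) (pow_le_pow_left₀ h0 h5 _)
      (pow_nonneg h0 _) (pow_nonneg hx'0 _)
  have hd : x' - x = y - y' := by linarith
  have hd0 : 0 ≤ y - y' := by linarith
  have := mul_le_mul_of_nonneg_right hterm hd0
  rw [e2] at this
  rw [hd] at e1
  linarith [e1, this]

noncomputable def PsiCore (k m c : ℕ) (W x y : ℝ) : ℝ :=
  if m = 0 then (if c ≤ k then W else 0)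
  else W * ((if c + 1 ≤ k then (1:ℝ) else 0) * (x ^ m + y ^ m)
          + (if c + 2 ≤ k then (1:ℝ) else 0) * ((x + y) ^ m - x ^ m - y ^ m))

noncomputable def Psi {N n : ℕ} (q : Fin N → ℝ) (a : Fin N) (k : ℕ) (x y : ℝ)
    (ρ : Fin n → Fin N) : ℝ :=
  PsiCore k (Finset.univ.filter fun i => ρ i = a).card
      (((Finset.univ.filter fun i => ρ i = a)ᶜ).image ρ).card
      (∏ i ∈ (Finset.univ.filter fun i => ρ i = a)ᶜ, q (ρ i)) x y

lemma psiCore_mono {k m c : ℕ} {W x y x' y' : ℝ} (hW : 0 ≤ W) (h0 : 0 ≤ y')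
    (h1 : y' ≤ y) (h2 : y ≤ x) (h3 : x ≤ x') (hs : x + y = x' + y') :
    PsiCore k m c W x y ≤ PsiCore k m c W x' y' := by
  unfold PsiCore
  have hsm : (x + y) ^ m = (x' + y') ^ m := by rw [hs]
  have hpow := pow_ineq m h0 h1 h2 h3 hs
  split_ifs with hm hc1 hc2 hc3
  · exact le_refl _
  · exact le_refl _
  · nlinarith
  · nlinarith
  · omega
  · simp

lemma binom_powerset {ι : Type*} [DecidableEq ι] (S : Finset ι) (x y : ℝ) :
    ∑ T ∈ S.powerset, x ^ (S.card - T.card) * y ^ T.card = (x + y) ^ S.card := by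
  have h := Finset.prod_add (fun _ : ι => y) (fun _ : ι => x) S
  rw [Finset.prod_const] at h
  rw [add_comm x y, h]
  apply Finset.sum_congr rfl
  intro T hT
  rw [Finset.prod_const, Finset.prod_const, Finset.card_sdiff_of_subset (Finset.mem_powerset.mp hT)]
  ring

lemma key_decomp {N n k : ℕ} (q : Fin N → ℝ) (a b : Fin N) (hab : a ≠ b) (x y : ℝ) :
    prob (Function.update (Function.update q a x) b y)
        {ω : Fin n → Fin N | distinctCount ω ≤ k}
      = ∑ ρ : Fin n → Fin N,
          (if b ∈ Finset.univ.image ρ then 0 else Psi q a k x y ρ) := by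
  classical
  set p' := Function.update (Function.update q a x) b y with hp'
  have hpa : p' a = x := by rw [hp', Function.update_of_ne hab, Function.update_self]
  have hpb : p' b = y := Function.update_self _ _ _
  have hpo : ∀ c, c ≠ a → c ≠ b → p' c = q c := fun c h1 h2 => by
    rw [hp', Function.update_of_ne h2, Function.update_of_ne h1]
  set F : (Fin n → Fin N) → ℝ :=
    fun ω => if distinctCount ω ≤ k then ∏ i, p' (ω i) else 0 with hF
  have hprob : prob p' {ω : Fin n → Fin N | distinctCount ω ≤ k} = ∑ ω, F ω := by
    unfold prob
    apply Finset.sum_congr rfl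
    intro ω _
    rw [Set.indicator_apply]
    rfl
  rw [hprob]
  set Φ : (Fin n → Fin N) → (Fin n → Fin N) :=
    fun ω i => if ω i = b then a else ω i with hΦ
  rw [← Finset.sum_fiberwise_of_maps_to (g := Φ) (t := Finset.univ)
    (fun ω _ => Finset.mem_univ (Φ ω)) F]
  apply Finset.sum_congr rfl
  intro ρ _
  have hΦnb : ∀ ω i, Φ ω i ≠ b := by
    intro ω i
    simp only [hΦ]
    split_ifs with h
    · exact hab
    · exact h
  by_cases hb : b ∈ Finset.univ.image ρ
  · rw [if_pos hb]
    apply Finset.sum_eq_zero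
    intro ω hω
    exfalso
    obtain ⟨i, -, hi⟩ := Finset.mem_image.mp hb
    have hfib := (Finset.mem_filter.mp hω).2
    have := congrFun hfib i
    rw [hi] at this
    exact hΦnb ω i this
  · rw [if_neg hb]
    have hρb : ∀ i, ρ i ≠ b := by
      intro i h
      exact hb (Finset.mem_image.mpr ⟨i, Finset.mem_univ _, h⟩)
    set S : Finset (Fin n) := Finset.univ.filter (fun i => ρ i = a) with hSdef
    set m := S.card with hm
    set D : Finset (Fin N) := (Sᶜ).image ρ with hD
    set c := D.card with hc
    set W : ℝ := ∏ i ∈ Sᶜ, q (ρ i) with hW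
    have hmemS : ∀ i, i ∈ S ↔ ρ i = a := by
      intro i; rw [hSdef, Finset.mem_filter]; simp
    have hmemSc : ∀ i, i ∈ Sᶜ ↔ ρ i ≠ a := by
      intro i; rw [Finset.mem_compl, hmemS]
    -- the parametrization of the fiber by subsets of S
    have hrec : ∀ ω, Φ ω = ρ →
        (fun i => if i ∈ Finset.univ.filter (fun i => ω i = b) then b else ρ i) = ω := by
      intro ω hfib
      funext i
      by_cases hi : ω i = b
      · simp [hi]
      · have h2 := congrFun hfib i
        simp only [hΦ] at h2
        rw [if_neg hi] at h2
        simp only [Finset.mem_filter, Finset.mem_univ, true_and, hi, if_false]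
        exact h2.symm
    have step1 : ∑ ω ∈ Finset.univ.filter (fun ω => Φ ω = ρ), F ω
        = ∑ T ∈ S.powerset, F (fun i => if i ∈ T then b else ρ i) := by
      apply Finset.sum_nbij' (i := fun ω => Finset.univ.filter (fun i => ω i = b))
        (j := fun T => (fun i => if i ∈ T then b else ρ i))
      · intro ω hω
        have hfib := (Finset.mem_filter.mp hω).2
        rw [Finset.mem_powerset]
        intro i hi
        rw [Finset.mem_filter] at hi
        rw [hmemS]
        have h2 := congrFun hfib i
        simp only [hΦ, hi.2, if_pos] at h2
        exact h2.symm
      · intro T hT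
        rw [Finset.mem_powerset] at hT
        rw [Finset.mem_filter]
        refine ⟨Finset.mem_univ _, ?_⟩
        funext i
        by_cases hi : i ∈ T
        · simp [hΦ, hi, (hmemS i).mp (hT hi)]
        · simp [hΦ, hi, hρb i]
      · intro ω hω
        exact hrec ω (Finset.mem_filter.mp hω).2
      · intro T hT
        rw [Finset.mem_powerset] at hT
        ext i
        simp only [Finset.mem_filter, Finset.mem_univ, true_and]
        constructor
        · intro h
          by_cases hi : i ∈ T
          · exact hi
          · rw [if_neg hi] at h
            exact absurd h (hρb i)
        · intro hi
          rw [if_pos hi]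
      · intro ω hω
        rw [hrec ω (Finset.mem_filter.mp hω).2]
    rw [step1]
    have hPsi : Psi q a k x y ρ = PsiCore k m c W x y := rfl
    rw [hPsi]
    -- product value for each T
    have haD : a ∉ D := by
      rw [hD]
      intro h
      obtain ⟨i, hi, he⟩ := Finset.mem_image.mp h
      exact (hmemSc i).mp hi he
    have hbD : b ∉ D := by
      rw [hD]
      intro h
      obtain ⟨i, hi, he⟩ := Finset.mem_image.mp h
      exact hρb i he
    have hprodT : ∀ T ∈ S.powerset,
        (∏ i, p' (if i ∈ T then b else ρ i)) = x ^ (m - T.card) * y ^ T.card * W := by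
      intro T hT'
      have hT := Finset.mem_powerset.mp hT'
      rw [← Finset.prod_mul_prod_compl S]
      have h1 : ∏ i ∈ Sᶜ, p' (if i ∈ T then b else ρ i) = W := by
        apply Finset.prod_congr rfl
        intro i hi
        have hiS : i ∉ S := Finset.mem_compl.mp hi
        rw [if_neg (fun h => hiS (hT h))]
        exact hpo _ ((hmemSc i).mp hi) (hρb i)
      have h2 : ∏ i ∈ S, p' (if i ∈ T then b else ρ i)
          = x ^ (m - T.card) * y ^ T.card := by
        rw [← Finset.prod_sdiff hT]
        have h3 : ∏ i ∈ S \ T, p' (if i ∈ T then b else ρ i) = x ^ (m - T.card) := by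
          rw [← Finset.card_sdiff_of_subset hT, ← Finset.prod_const]
          apply Finset.prod_congr rfl
          intro i hi
          obtain ⟨hiS, hiT⟩ := Finset.mem_sdiff.mp hi
          rw [if_neg hiT, (hmemS i).mp hiS, hpa]
        have h4 : ∏ i ∈ T, p' (if i ∈ T then b else ρ i) = y ^ T.card := by
          rw [← Finset.prod_const]
          apply Finset.prod_congr rfl
          intro i hi
          rw [if_pos hi, hpb]
        rw [h3, h4]
      rw [h1, h2]
    by_cases hS : S = ∅
    · -- empty S : the fiber is {ρ} itself
      have hm0 : m = 0 := by rw [hm, hS, Finset.card_empty]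
      rw [hS, Finset.powerset_empty, Finset.sum_singleton]
      unfold PsiCore
      rw [if_pos hm0]
      have hωe : (fun i => if i ∈ (∅ : Finset (Fin n)) then b else ρ i) = ρ := by
        funext i; simp
      rw [hωe]
      have hdc : distinctCount ρ = c := by
        rw [distinctCount, hc, hD, hS, Finset.compl_empty]
      have hprod : ∏ i, p' (ρ i) = W := by
        rw [hW, hS, Finset.compl_empty]
        apply Finset.prod_congr rfl
        intro i _
        refine hpo _ (fun h => ?_) (hρb i)
        have : i ∈ S := (hmemS i).mpr h
        rw [hS] at this
        exact absurd this (Finset.notMem_empty i)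
      simp only [hF, hdc, hprod]
    · have hSne : S.Nonempty := Finset.nonempty_iff_ne_empty.mpr hS
      have hm1 : m ≠ 0 := by
        rw [hm]
        simpa [Finset.card_eq_zero] using hS
      -- distinct count for each T
      have himgSc : ∀ T ∈ S.powerset,
          (Sᶜ).image (fun i => if i ∈ T then b else ρ i) = D := by
        intro T hT'
        have hT := Finset.mem_powerset.mp hT'
        rw [hD]
        apply Finset.image_congr
        intro i hi
        have hiS : i ∉ S := Finset.mem_compl.mp (by exact_mod_cast hi)
        exact if_neg (fun h => hiS (hT h))
      have himg : ∀ T ∈ S.powerset,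
          Finset.univ.image (fun i => if i ∈ T then b else ρ i)
            = S.image (fun i => if i ∈ T then b else ρ i) ∪ D := by
        intro T hT'
        rw [← himgSc T hT', ← Finset.image_union, Finset.union_compl]
      have hcard : ∀ T ∈ S.powerset,
          distinctCount (fun i => if i ∈ T then b else ρ i)
            = c + (if T = ∅ ∨ T = S then 1 else 2) := by
        intro T hT'
        have hT := Finset.mem_powerset.mp hT'
        rw [distinctCount, himg T hT']
        have hsub : S.image (fun i => if i ∈ T then b else ρ i) ⊆ {a, b} := by
          intro z hz
          obtain ⟨i, hi, he⟩ := Finset.mem_image.mp hz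
          by_cases hiT : i ∈ T
          · rw [if_pos hiT] at he
            simp [← he]
          · rw [if_neg hiT, (hmemS i).mp hi] at he
            simp [← he]
        have hdisj : Disjoint (S.image (fun i => if i ∈ T then b else ρ i)) D := by
          rw [Finset.disjoint_left]
          intro z hz hzD
          rcases Finset.mem_insert.mp (hsub hz) with h | h
          · exact haD (h ▸ hzD)
          · rw [Finset.mem_singleton] at h
            exact hbD (h ▸ hzD)
        rw [Finset.card_union_of_disjoint hdisj, add_comm]
        congr 1
        by_cases h0 : T = ∅
        · have : S.image (fun i => if i ∈ T then b else ρ i) = {a} := by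
            have heq : Set.EqOn (fun i => if i ∈ T then b else ρ i) (fun _ => a) ↑S := by
              intro i hi
              simp only [h0, Finset.notMem_empty, if_false]
              exact (hmemS i).mp (by exact_mod_cast hi)
            rw [Finset.image_congr heq, Finset.image_const hSne]
          rw [this, if_pos (Or.inl h0), Finset.card_singleton]
        · by_cases h1 : T = S
          · have : S.image (fun i => if i ∈ T then b else ρ i) = {b} := by
              have heq : Set.EqOn (fun i => if i ∈ T then b else ρ i) (fun _ => b) ↑S := by
                intro i hi
                show (if i ∈ T then b else ρ i) = b
                rw [if_pos (h1 ▸ (by exact_mod_cast hi : i ∈ S))]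
              rw [Finset.image_congr heq, Finset.image_const hSne]
            rw [this, if_pos (Or.inr h1), Finset.card_singleton]
          · have hTne : T.Nonempty := Finset.nonempty_iff_ne_empty.mpr h0
            have hSTne : (S \ T).Nonempty := by
              rw [Finset.sdiff_nonempty]
              intro h
              exact h1 (Finset.Subset.antisymm hT h)
            have : S.image (fun i => if i ∈ T then b else ρ i) = {b, a} := by
              rw [← Finset.union_sdiff_of_subset hT, Finset.image_union]
              have e1 : T.image (fun i => if i ∈ T then b else ρ i) = {b} := by
                have heq : Set.EqOn (fun i => if i ∈ T then b else ρ i) (fun _ => b) ↑T := by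
                  intro i hi
                  show (if i ∈ T then b else ρ i) = b
                  rw [if_pos (by exact_mod_cast hi)]
                rw [Finset.image_congr heq, Finset.image_const hTne]
              have e2 : (S \ T).image (fun i => if i ∈ T then b else ρ i) = {a} := by
                have heq : Set.EqOn (fun i => if i ∈ T then b else ρ i) (fun _ => a) ↑(S \ T) := by
                  intro i hi
                  have hi' : i ∈ S \ T := by exact_mod_cast hi
                  obtain ⟨hiS, hiT⟩ := Finset.mem_sdiff.mp hi'
                  show (if i ∈ T then b else ρ i) = a
                  rw [if_neg hiT]
                  exact (hmemS i).mp hiS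
                rw [Finset.image_congr heq, Finset.image_const hSTne]
              rw [e1, e2]
              rfl
            rw [this, if_neg (by tauto), Finset.card_pair hab.symm]
      -- value of F on each ωT
      have hFval : ∀ T ∈ S.powerset, F (fun i => if i ∈ T then b else ρ i)
          = if c + (if T = ∅ ∨ T = S then 1 else 2) ≤ k
            then x ^ (m - T.card) * y ^ T.card * W else 0 := by
        intro T hT'
        simp only [hF]
        rw [hcard T hT', hprodT T hT']
      rw [Finset.sum_congr rfl hFval]
      unfold PsiCore
      rw [if_neg hm1]
      rcases le_or_gt (c + 2) k with h2 | h2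
      · have h1 : c + 1 ≤ k := by omega
        rw [if_pos h1, if_pos h2]
        have hall : ∀ T ∈ S.powerset,
            (if c + (if T = ∅ ∨ T = S then 1 else 2) ≤ k
              then x ^ (m - T.card) * y ^ T.card * W else 0)
            = x ^ (m - T.card) * y ^ T.card * W := by
          intro T _
          have he : (if T = ∅ ∨ T = S then 1 else 2) ≤ 2 := by split_ifs <;> omega
          rw [if_pos (by omega)]
        rw [Finset.sum_congr rfl hall]
        have : ∑ T ∈ S.powerset, x ^ (m - T.card) * y ^ T.card * W
            = (∑ T ∈ S.powerset, x ^ (m - T.card) * y ^ T.card) * W := by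
          rw [Finset.sum_mul]
        rw [this, binom_powerset]
        ring
      · rcases le_or_gt (c + 1) k with h1 | h1
        · rw [if_pos h1, if_neg (by omega)]
          have hzero : ∀ T ∈ S.powerset, T ∉ ({∅, S} : Finset (Finset (Fin n))) →
              (if c + (if T = ∅ ∨ T = S then 1 else 2) ≤ k
                then x ^ (m - T.card) * y ^ T.card * W else 0) = 0 := by
            intro T _ hTn
            simp only [Finset.mem_insert, Finset.mem_singleton] at hTn
            rw [if_neg (show ¬(T = ∅ ∨ T = S) by tauto)]
            rw [if_neg (show ¬(c + 2 ≤ k) by omega)]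
          have hsubset : ({∅, S} : Finset (Finset (Fin n))) ⊆ S.powerset := by
            intro T hT
            simp only [Finset.mem_insert, Finset.mem_singleton] at hT
            rcases hT with h | h
            · rw [h]; exact Finset.empty_mem_powerset S
            · rw [h]; exact Finset.mem_powerset_self S
          rw [← Finset.sum_subset hsubset hzero]
          rw [Finset.sum_pair (fun h => hS h.symm)]
          rw [if_pos (Or.inl rfl), if_pos (Or.inr rfl)]
          rw [if_pos (by omega), if_pos (by omega)]
          simp only [Finset.card_empty, Nat.sub_zero, pow_zero, ← hm, Nat.sub_self]
          ring
        · rw [if_neg (by omega), if_neg (by omega)]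
          rw [Finset.sum_eq_zero]
          · ring
          · intro T _
            have he : 1 ≤ (if T = ∅ ∨ T = S then 1 else 2) := by split_ifs <;> omega
            rw [if_neg (by omega)]

lemma transfer_le {N n k : ℕ} (q : Fin N → ℝ) (hq0 : ∀ i, 0 ≤ q i) (a b : Fin N)
    (hab : a ≠ b) (x y : ℝ) (h1 : q b ≤ y) (h2 : y ≤ x) (h3 : x ≤ q a)
    (hs : x + y = q a + q b) :
    prob (Function.update (Function.update q a x) b y)
        {ω : Fin n → Fin N | distinctCount ω ≤ k}
      ≤ prob q {ω : Fin n → Fin N | distinctCount ω ≤ k} := by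
  classical
  have hq' : q = Function.update (Function.update q a (q a)) b (q b) := by
    rw [Function.update_eq_self, Function.update_eq_self]
  conv_rhs => rw [hq']
  rw [key_decomp q a b hab x y, key_decomp q a b hab (q a) (q b)]
  apply Finset.sum_le_sum
  intro ρ _
  by_cases hb : b ∈ Finset.univ.image ρ
  · rw [if_pos hb, if_pos hb]
  · rw [if_neg hb, if_neg hb]
    unfold Psi
    apply psiCore_mono _ (hq0 b) h1 h2 h3 hs
    exact Finset.prod_nonneg (fun i _ => hq0 (ρ i))

noncomputable def Pref {N : ℕ} (f : Fin N → ℝ) (t : ℕ) : ℝ :=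
  ∑ i ∈ Finset.univ.filter (fun i : Fin N => (i : ℕ) < t), f i

lemma Pref_succ {N : ℕ} (f : Fin N → ℝ) (t : ℕ) (ht : t < N) :
    Pref f (t + 1) = Pref f t + f ⟨t, ht⟩ := by
  unfold Pref
  have hins : Finset.univ.filter (fun i : Fin N => (i : ℕ) < t + 1)
      = insert ⟨t, ht⟩ (Finset.univ.filter (fun i : Fin N => (i : ℕ) < t)) := by
    ext i
    simp only [Finset.mem_filter, Finset.mem_univ, true_and, Finset.mem_insert, Fin.ext_iff]
    omega
  rw [hins, Finset.sum_insert (by simp)]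
  ring

lemma sorted_le {N n k : ℕ} (p : Fin N → ℝ) (hp0 : ∀ i, 0 ≤ p i)
    (hpa : ∀ i j : Fin N, i ≤ j → p j ≤ p i) :
    ∀ (M : ℕ) (q : Fin N → ℝ),
      (Finset.univ.filter (fun i => p i ≠ q i)).card ≤ M →
      (∀ i, 0 ≤ q i) → (∀ i j : Fin N, i ≤ j → q j ≤ q i) →
      (∑ i, p i = ∑ i, q i) → (∀ t, Pref p t ≤ Pref q t) →
      prob p {ω : Fin n → Fin N | distinctCount ω ≤ k}
        ≤ prob q {ω : Fin n → Fin N | distinctCount ω ≤ k} := by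
  classical
  intro M
  induction M with
  | zero =>
    intro q hcard _ _ _ _
    have hfe : Finset.univ.filter (fun i => p i ≠ q i) = ∅ :=
      Finset.card_eq_zero.mp (Nat.le_antisymm hcard (Nat.zero_le _))
    have hpq : p = q := by
      funext i
      by_contra h
      have : i ∈ Finset.univ.filter (fun i => p i ≠ q i) := by
        simp [h]
      rw [hfe] at this
      exact absurd this (Finset.notMem_empty i)
    rw [hpq]
  | succ M IH =>
    intro q hcard hq0 hqa hsum hpref
    by_cases hD0 : (Finset.univ.filter (fun i => p i ≠ q i)).card = 0
    · have hfe : Finset.univ.filter (fun i => p i ≠ q i) = ∅ := Finset.card_eq_zero.mp hD0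
      have hpq : p = q := by
        funext i
        by_contra h
        have : i ∈ Finset.univ.filter (fun i => p i ≠ q i) := by simp [h]
        rw [hfe] at this
        exact absurd this (Finset.notMem_empty i)
      rw [hpq]
    · set D := Finset.univ.filter (fun i => p i ≠ q i) with hDdef
      have hDne : D.Nonempty := Finset.card_pos.mp (Nat.pos_of_ne_zero hD0)
      -- the smallest index where q < p
      set L := Finset.univ.filter (fun i => q i < p i) with hLdef
      have hLne : L.Nonempty := by
        by_contra h
        rw [Finset.not_nonempty_iff_eq_empty] at h
        have hall : ∀ i, p i ≤ q i := by
          intro i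
          by_contra hlt
          have : i ∈ L := by
            rw [hLdef, Finset.mem_filter]
            exact ⟨Finset.mem_univ _, not_le.mp hlt⟩
          rw [h] at this
          exact absurd this (Finset.notMem_empty i)
        obtain ⟨i0, hi0⟩ := hDne
        have hi0' : p i0 ≠ q i0 := (Finset.mem_filter.mp hi0).2
        have : ∑ i, p i < ∑ i, q i :=
          Finset.sum_lt_sum (fun i _ => hall i)
            ⟨i0, Finset.mem_univ _, lt_of_le_of_ne (hall i0) hi0'⟩
        linarith [hsum.ge, hsum.le, this]
      set l := L.min' hLne with hl_def
      have hl : q l < p l := (Finset.mem_filter.mp (L.min'_mem hLne)).2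
      have hlmin : ∀ i, q i < p i → l ≤ i := fun i hi =>
        L.min'_le i (Finset.mem_filter.mpr ⟨Finset.mem_univ _, hi⟩)
      -- the largest index below l where p < q
      set J := Finset.univ.filter (fun i => i < l ∧ p i < q i) with hJdef
      have hJne : J.Nonempty := by
        have hstep := hpref (l.val + 1)
        rw [Pref_succ p l.val l.isLt, Pref_succ q l.val l.isLt] at hstep
        simp only [Fin.eta] at hstep
        by_contra hJe
        rw [Finset.not_nonempty_iff_eq_empty] at hJe
        have hle : Pref q l.val ≤ Pref p l.val := by
          unfold Pref
          apply Finset.sum_le_sum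
          intro i hi
          have hiv : (i : ℕ) < l.val := (Finset.mem_filter.mp hi).2
          have hilt : i < l := hiv
          by_contra hgt
          have : i ∈ J := by
            rw [hJdef, Finset.mem_filter]
            exact ⟨Finset.mem_univ _, hilt, not_le.mp hgt⟩
          rw [hJe] at this
          exact absurd this (Finset.notMem_empty i)
        linarith
      set j := J.max' hJne with hj_def
      have hjprop := (Finset.mem_filter.mp (J.max'_mem hJne)).2
      have hjl : j < l := hjprop.1
      have hjq : p j < q j := hjprop.2
      have hjmax : ∀ i, i < l → p i < q i → i ≤ j := fun i h1 h2 =>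
        J.le_max' i (Finset.mem_filter.mpr ⟨Finset.mem_univ _, h1, h2⟩)
      have hmid : ∀ i, j < i → i < l → p i = q i := by
        intro i h1 h2
        by_contra h
        rcases lt_or_gt_of_ne h with hlt | hgt
        · exact absurd (hjmax i h2 hlt) (not_le.mpr h1)
        · exact absurd (hlmin i hgt) (not_le.mpr h2)
      set ε := min (q j - p j) (p l - q l) with hεdef
      have hε0 : 0 < ε := lt_min (by linarith) (by linarith)
      have hε1 : ε ≤ q j - p j := min_le_left _ _
      have hε2 : ε ≤ p l - q l := min_le_right _ _
      have hne : j ≠ l := ne_of_lt hjl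
      set q' := Function.update (Function.update q j (q j - ε)) l (q l + ε) with hq'def
      have hq'j : q' j = q j - ε := by
        rw [hq'def, Function.update_of_ne hne, Function.update_self]
      have hq'l : q' l = q l + ε := Function.update_self _ _ _
      have hq'o : ∀ i, i ≠ j → i ≠ l → q' i = q i := fun i hij hil => by
        rw [hq'def, Function.update_of_ne hil, Function.update_of_ne hij]
      have hq'eq : ∀ i, q' i = q i + (if i = j then -ε else 0) + (if i = l then ε else 0) := by
        intro i
        by_cases hij : i = j
        · subst hij
          rw [hq'j, if_pos rfl, if_neg hne]
          ring
        · by_cases hil : i = l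
          · subst hil
            rw [hq'l, if_neg hij, if_pos rfl]
            ring
          · rw [hq'o i hij hil, if_neg hij, if_neg hil]
            ring
      have hb1 : p j ≤ q' j := by rw [hq'j]; linarith
      have hb2 : q' l ≤ p l := by rw [hq'l]; linarith
      have hplj : p l ≤ p j := hpa j l (le_of_lt hjl)
      have hq'0 : ∀ i, 0 ≤ q' i := by
        intro i
        by_cases hij : i = j
        · rw [hij, hq'j]; linarith [hp0 j]
        · by_cases hil : i = l
          · rw [hil, hq'l]; linarith [hq0 l]
          · rw [hq'o i hij hil]; exact hq0 i
      -- q' is still antitone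
      have hq'a : ∀ i1 i2 : Fin N, i1 ≤ i2 → q' i2 ≤ q' i1 := by
        intro i1 i2 h12
        by_cases h1j : i1 = j
        · subst h1j
          by_cases h2l : i2 = l
          · rw [h2l, hq'j, hq'l]; linarith
          · by_cases h2j : i2 = j
            · rw [h2j]
            · rw [hq'o i2 h2j h2l, hq'j]
              have h2gt : j < i2 := lt_of_le_of_ne h12 (fun h => h2j h.symm)
              by_cases hcase : i2 < l
              · have := hmid i2 h2gt hcase
                have := hpa j i2 h12
                linarith
              · have hli2 : l ≤ i2 := not_lt.mp hcase
                have := hqa l i2 hli2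
                rw [hq'l] at hb2
                linarith
        · by_cases h1l : i1 = l
          · subst h1l
            by_cases h2l : i2 = l
            · rw [h2l]
            · have h2j : i2 ≠ j := by
                intro h
                rw [h] at h12
                exact absurd (lt_of_lt_of_le hjl h12) (lt_irrefl _)
              rw [hq'o i2 h2j h2l, hq'l]
              have h5 := hqa l i2 h12
              linarith
          · rw [hq'o i1 h1j h1l]
            by_cases h2j : i2 = j
            · rw [h2j, hq'j]
              have : q j ≤ q i1 := hqa i1 j (h2j ▸ h12)
              linarith
            · by_cases h2l : i2 = l
              · rw [h2l, hq'l]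
                have h1lt : i1 < l := lt_of_le_of_ne (h2l ▸ h12) h1l
                rcases lt_or_gt_of_ne h1j with hlt | hgt
                · have e1 : q j ≤ q i1 := hqa i1 j (le_of_lt hlt)
                  linarith
                · have e2 := hmid i1 hgt h1lt
                  have e3 : p l ≤ p i1 := hpa i1 l (le_of_lt h1lt)
                  linarith
              · rw [hq'o i2 h2j h2l]
                exact hqa i1 i2 h12
      -- total sum preserved
      have hsum' : ∑ i, p i = ∑ i, q' i := by
        rw [hsum]
        have e : ∑ i, q' i
            = ∑ i, (q i + (if i = j then -ε else 0) + (if i = l then ε else 0)) :=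
          Finset.sum_congr rfl (fun i _ => hq'eq i)
        rw [e, Finset.sum_add_distrib, Finset.sum_add_distrib,
          Finset.sum_ite_eq' Finset.univ j (fun _ => -ε),
          Finset.sum_ite_eq' Finset.univ l (fun _ => ε)]
        simp
      -- prefix majorization preserved
      have hjlv : (j : ℕ) < (l : ℕ) := hjl
      have hpref' : ∀ t, Pref p t ≤ Pref q' t := by
        intro t
        have hPq' : Pref q' t = Pref q t + (if (j : ℕ) < t then -ε else 0)
            + (if (l : ℕ) < t then ε else 0) := by
          unfold Pref
          have e : ∑ i ∈ Finset.univ.filter (fun i : Fin N => (i : ℕ) < t), q' i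
              = ∑ i ∈ Finset.univ.filter (fun i : Fin N => (i : ℕ) < t),
                  (q i + (if i = j then -ε else 0) + (if i = l then ε else 0)) :=
            Finset.sum_congr rfl (fun i _ => hq'eq i)
          rw [e, Finset.sum_add_distrib, Finset.sum_add_distrib,
            Finset.sum_ite_eq' _ j (fun _ => -ε),
            Finset.sum_ite_eq' _ l (fun _ => ε)]
          simp [Finset.mem_filter]
        rw [hPq']
        by_cases htj : (j : ℕ) < t
        · by_cases htl : (l : ℕ) < t
          · rw [if_pos htj, if_pos htl]
            have := hpref t
            linarith
          · rw [if_pos htj, if_neg htl]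
            have htl' : t ≤ (l : ℕ) := not_lt.mp htl
            have hsub : Finset.univ.filter (fun i : Fin N => (i : ℕ) < (j : ℕ) + 1)
                ⊆ Finset.univ.filter (fun i : Fin N => (i : ℕ) < t) := by
              intro i hi
              simp only [Finset.mem_filter, Finset.mem_univ, true_and] at hi ⊢
              omega
            have hvanish : ∀ i ∈ Finset.univ.filter (fun i : Fin N => (i : ℕ) < t),
                i ∉ Finset.univ.filter (fun i : Fin N => (i : ℕ) < (j : ℕ) + 1) →
                q i - p i = 0 := by
              intro i hi hni
              simp only [Finset.mem_filter, Finset.mem_univ, true_and] at hi hni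
              have hij : j < i := by
                have : (j : ℕ) < (i : ℕ) := by omega
                exact this
              have hil : i < l := by
                have : (i : ℕ) < (l : ℕ) := by omega
                exact this
              rw [hmid i hij hil]
              ring
            have heq2 := Finset.sum_subset hsub hvanish (f := fun i => q i - p i)
            have e3 : ∀ (f g : Fin N → ℝ) (s : ℕ),
                ∑ i ∈ Finset.univ.filter (fun i : Fin N => (i : ℕ) < s), (f i - g i)
                  = Pref f s - Pref g s := by
              intro f g s
              unfold Pref
              rw [Finset.sum_sub_distrib]
            rw [e3] at heq2
            rw [e3] at heq2
            have e5 := Pref_succ q (j : ℕ) j.isLt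
            have e6 := Pref_succ p (j : ℕ) j.isLt
            simp only [Fin.eta] at e5 e6
            have e7 := hpref (j : ℕ)
            linarith
        · have htl : ¬ (l : ℕ) < t := by omega
          rw [if_neg htj, if_neg htl]
          have := hpref t
          linarith
      -- the disagreement set strictly decreases
      have hmeas : (Finset.univ.filter (fun i => p i ≠ q' i)).card ≤ M := by
        have hss : Finset.univ.filter (fun i => p i ≠ q' i) ⊂ D := by
          rw [Finset.ssubset_iff_of_subset]
          · rcases le_total (q j - p j) (p l - q l) with hc | hc
            · refine ⟨j, ?_, ?_⟩
              · rw [hDdef, Finset.mem_filter]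
                exact ⟨Finset.mem_univ _, ne_of_lt hjq⟩
              · simp only [Finset.mem_filter, Finset.mem_univ, true_and, not_not]
                rw [hq'j, hεdef, min_eq_left hc]
                ring
            · refine ⟨l, ?_, ?_⟩
              · rw [hDdef, Finset.mem_filter]
                exact ⟨Finset.mem_univ _, (ne_of_lt hl).symm⟩
              · simp only [Finset.mem_filter, Finset.mem_univ, true_and, not_not]
                rw [hq'l, hεdef, min_eq_right hc]
                ring
          · intro i hi
            have hi' : p i ≠ q' i := (Finset.mem_filter.mp hi).2
            rw [hDdef, Finset.mem_filter]
            refine ⟨Finset.mem_univ _, ?_⟩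
            by_cases hij : i = j
            · rw [hij]; exact ne_of_lt hjq
            · by_cases hil : i = l
              · rw [hil]; exact (ne_of_lt hl).symm
              · rw [← hq'o i hij hil]; exact hi'
        have := Finset.card_lt_card hss
        omega
      calc prob p {ω : Fin n → Fin N | distinctCount ω ≤ k}
          ≤ prob q' {ω : Fin n → Fin N | distinctCount ω ≤ k} :=
            IH q' hmeas hq'0 hq'a hsum' hpref'
        _ ≤ prob q {ω : Fin n → Fin N | distinctCount ω ≤ k} := by
            rw [hq'def]
            apply transfer_le q hq0 j l hne (q j - ε) (q l + ε)
            · linarith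
            · rw [hq'j] at hb1
              rw [hq'l] at hb2
              linarith
            · linarith
            · ring

lemma prob_perm {N n k : ℕ} (p : Fin N → ℝ) (σ : Equiv.Perm (Fin N)) :
    prob (fun i => p (σ i)) {ω : Fin n → Fin N | distinctCount ω ≤ k}
      = prob p {ω : Fin n → Fin N | distinctCount ω ≤ k} := by
  unfold prob
  apply Fintype.sum_equiv (Equiv.arrowCongr (Equiv.refl (Fin n)) σ)
  intro ω
  have hdc : distinctCount (fun x => σ (ω x)) = distinctCount ω := by
    unfold distinctCount
    have e : Finset.univ.image (fun x => σ (ω x)) = (Finset.univ.image ω).image σ := by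
      rw [Finset.image_image]
      rfl
    rw [e, Finset.card_image_of_injective _ σ.injective]
  have he : ((Equiv.refl (Fin n)).arrowCongr σ) ω = fun x => σ (ω x) := by
    funext x
    simp [Equiv.arrowCongr]
  simp only [Set.indicator_apply, Set.mem_setOf_eq, he, hdc]

lemma majorizes_perm {N : ℕ} {q p : Fin N → ℝ} (h : Majorizes q p)
    (σ τ : Equiv.Perm (Fin N)) :
    Majorizes (fun i => q (τ i)) (fun i => p (σ i)) := by
  intro A
  obtain ⟨B, hBcard, hBsum⟩ := h (A.image σ)
  refine ⟨B.image τ.symm, ?_, ?_⟩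
  · rw [Finset.card_image_of_injective _ τ.symm.injective, hBcard,
      Finset.card_image_of_injective _ σ.injective]
  · have e1 : ∑ i ∈ A, p (σ i) = ∑ i ∈ A.image σ, p i :=
      (Finset.sum_image (fun a _ b _ hab => σ.injective hab)).symm
    have e2 : ∑ i ∈ B.image τ.symm, q (τ i) = ∑ i ∈ B, q i := by
      rw [Finset.sum_image (fun a _ b _ hab => τ.symm.injective hab)]
      apply Finset.sum_congr rfl
      intro i _
      rw [Equiv.apply_symm_apply]
    rw [e1, e2]
    exact hBsum

lemma sum_le_pref {N : ℕ} (q : Fin N → ℝ)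
    (hqa : ∀ i j : Fin N, i ≤ j → q j ≤ q i) (B : Finset (Fin N)) :
    ∑ i ∈ B, q i ≤ Pref q B.card := by
  classical
  induction B using Finset.strongInduction with
  | _ B IH =>
    rcases B.eq_empty_or_nonempty with hB | hB
    · subst hB
      simp [Pref]
    · set M := B.max' hB with hM_def
      have hMmem : M ∈ B := B.max'_mem hB
      have hM : ∀ i ∈ B, i ≤ M := fun i hi => B.le_max' i hi
      have hcard_le : B.card ≤ (M : ℕ) + 1 := by
        have hsub : B ⊆ Finset.Iic M := fun i hi => Finset.mem_Iic.mpr (hM i hi)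
        calc B.card ≤ (Finset.Iic M).card := Finset.card_le_card hsub
          _ = (M : ℕ) + 1 := by rw [Fin.card_Iic]
      have hc1 : 1 ≤ B.card := Finset.card_pos.mpr hB
      have hcN : B.card ≤ N := le_trans (Finset.card_le_univ B) (by simp)
      have hlt : B.card - 1 < N := by omega
      have hIH := IH (B.erase M) (Finset.erase_ssubset hMmem)
      rw [Finset.card_erase_of_mem hMmem] at hIH
      have hsplit : ∑ i ∈ B.erase M, q i + q M = ∑ i ∈ B, q i :=
        Finset.sum_erase_add B q hMmem
      have hPsucc := Pref_succ q (B.card - 1) hlt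
      have hwork : B.card - 1 + 1 = B.card := by omega
      rw [hwork] at hPsucc
      have hq0' : q M ≤ q ⟨B.card - 1, hlt⟩ := by
        apply hqa
        rw [Fin.le_def]
        simp only []
        omega
      linarith

/-- Corollary 6.1 (Schur convexity): if `p ≺ q` then
`P_p(Y_n ≤ k) ≤ P_q(Y_n ≤ k)` for all `n ≥ 1`, `k ≥ 1`. -/
theorem stmt_19 (N : ℕ) (p q : Fin N → ℝ)
    (hp : ∀ i, 0 ≤ p i) (hpsum : ∑ i, p i = 1)
    (hq : ∀ i, 0 ≤ q i) (hqsum : ∑ i, q i = 1)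
    (hmaj : Majorizes q p) (n k : ℕ) (hn : 1 ≤ n) (hk : 1 ≤ k) :
    prob p {ω : Fin n → Fin N | distinctCount ω ≤ k}
      ≤ prob q {ω : Fin n → Fin N | distinctCount ω ≤ k} := by
  classical
  set σ := Tuple.sort (fun i => -p i) with hσ
  set τ := Tuple.sort (fun i => -q i) with hτ
  set p' := fun i => p (σ i) with hp'
  set q' := fun i => q (τ i) with hq'
  have hp'0 : ∀ i, 0 ≤ p' i := fun i => hp _
  have hq'0 : ∀ i, 0 ≤ q' i := fun i => hq _
  have hp'a : ∀ i j : Fin N, i ≤ j → p' j ≤ p' i := by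
    intro i j hij
    have h := Tuple.monotone_sort (fun i => -p i) hij
    simp only [Function.comp_apply] at h
    rw [hp']
    linarith [h]
  have hq'a : ∀ i j : Fin N, i ≤ j → q' j ≤ q' i := by
    intro i j hij
    have h := Tuple.monotone_sort (fun i => -q i) hij
    simp only [Function.comp_apply] at h
    rw [hq']
    linarith [h]
  have hmaj' : Majorizes q' p' := majorizes_perm hmaj σ τ
  have hsum' : ∑ i, p' i = ∑ i, q' i := by
    rw [hp', hq', Equiv.sum_comp σ p, Equiv.sum_comp τ q, hpsum, hqsum]
  have hpref : ∀ t, Pref p' t ≤ Pref q' t := by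
    intro t
    set A := Finset.univ.filter (fun i : Fin N => (i : ℕ) < t) with hA
    obtain ⟨B, hBc, hBs⟩ := hmaj' A
    have h1 : ∑ i ∈ B, q' i ≤ Pref q' B.card := sum_le_pref q' hq'a B
    rw [hBc] at h1
    have hAt : A.card ≤ t := by
      have e : A.card = (A.image (fun i : Fin N => (i : ℕ))).card :=
        (Finset.card_image_of_injective _ Fin.val_injective).symm
      rw [e]
      have hsub : A.image (fun i : Fin N => (i : ℕ)) ⊆ Finset.range t := by
        intro v hv
        obtain ⟨i, hi, rfl⟩ := Finset.mem_image.mp hv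
        rw [Finset.mem_range]
        exact (Finset.mem_filter.mp hi).2
      calc (A.image _).card ≤ (Finset.range t).card := Finset.card_le_card hsub
        _ = t := Finset.card_range t
    have h2 : Pref q' A.card ≤ Pref q' t := by
      unfold Pref
      apply Finset.sum_le_sum_of_subset_of_nonneg
      · intro i hi
        simp only [Finset.mem_filter, Finset.mem_univ, true_and] at hi ⊢
        omega
      · intro i _ _
        exact hq'0 i
    exact le_trans hBs (le_trans h1 h2)
  have main := sorted_le (n := n) (k := k) p' hp'0 hp'a
    (Finset.univ.filter (fun i => p' i ≠ q' i)).card q' le_rfl hq'0 hq'a hsum' hpref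
  rw [hp', hq', prob_perm p σ, prob_perm q τ] at main
  exact main
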